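/- Let p ≥ 3 be a prime and G = ⟨s, t | t^{p²} = s^p = 1, s⁻¹ t s = t^{p+1}⟩ = C_{p²} ⋊ C_p. Then there is no automorphism of G sending s to s⁻¹. -/

import Mathlib

/-- Relations for the presentation `⟨s, t | t^(p²) = s^p = 1, s⁻¹ t s = t^(p+1)⟩`,
with `s = of 0` and `t = of 1`. -/
def heisRels (p : ℕ) : Set (FreeGroup (Fin 2)) :=
  {FreeGroup.of 1 ^ (p ^ 2), FreeGroup.of 0 ^ p,
    (FreeGroup.of 0)⁻¹ * FreeGroup.of 1 * FreeGroup.of 0 * (FreeGroup.of 1 ^ (p + 1))⁻¹}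

namespace NA
variable (p : ℕ)

lemma psq : ((p:ZMod (p^2)))^2 = 0 := by
  have h : ((p^2 : ℕ) : ZMod (p^2)) = 0 := ZMod.natCast_self _
  push_cast at h; exact h

lemma cast_pow (k : ℕ) : (((1+p)^k : ℕ) : ZMod (p^2)) = 1 + k * p := by
  induction k with
  | zero => simp
  | succ n ih =>
    push_cast [pow_succ] at ih ⊢
    rw [ih]
    linear_combination (n : ZMod (p^2)) * psq p

/-- v = (1+p)^(p-1) in ZMod p², inverse of (1+p). -/
def v : ZMod (p^2) := ((1+p)^(p-1) : ℕ)

lemma v_mul (h1 : 1 ≤ p) : ((1:ZMod (p^2)) + p) * v p = 1 := by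
  have : ((1:ZMod (p^2)) + p) * v p = (((1+p)^(1+(p-1)) : ℕ) : ZMod (p^2)) := by
    rw [pow_add]; push_cast [v]; ring
  rw [this, Nat.add_sub_cancel' h1, cast_pow]
  linear_combination psq p

def sigma (h1 : 1 ≤ p) : Equiv.Perm (ZMod (p^2)) where
  toFun x := v p * x
  invFun x := (1 + p) * x
  left_inv x := by show (1+(p:ZMod (p^2))) * (v p * x) = x; rw [← mul_assoc, v_mul p h1, one_mul]
  right_inv x := by
    show v p * ((1+(p:ZMod (p^2))) * x) = x
    rw [← mul_assoc, mul_comm (v p), v_mul p h1, one_mul]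

def tau : Equiv.Perm (ZMod (p^2)) := Equiv.addRight 1

lemma tau_pow (n : ℕ) (x : ZMod (p^2)) : (tau p ^ n) x = x + n := by
  induction n with
  | zero => simp
  | succ k ih =>
    simp only [pow_succ', Equiv.Perm.mul_apply, ih]
    show (x + (k:ZMod (p^2))) + 1 = _
    push_cast; ring

lemma sigma_pow (h1 : 1 ≤ p) (n : ℕ) (x : ZMod (p^2)) :
    (sigma p h1 ^ n) x = v p ^ n * x := by
  induction n with
  | zero => simp
  | succ k ih =>
    simp only [pow_succ', Equiv.Perm.mul_apply]
    show v p * (sigma p h1 ^ k) x = _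
    rw [ih]; ring

lemma v_pow_p (h1 : 1 ≤ p) : v p ^ p = 1 := by
  have : v p ^ p = (((1+p)^((p-1)*p) : ℕ) : ZMod (p^2)) := by rw [pow_mul]; push_cast [v]; rfl
  rw [this, cast_pow]
  push_cast [Nat.cast_sub h1]
  linear_combination (p - 1 : ZMod (p^2)) * psq p

end NA

namespace NA
variable (p : ℕ) (h1 : 1 ≤ p)

lemma rels_hold (h1 : 1 ≤ p) : ∀ r ∈ heisRels p,
    FreeGroup.lift (![sigma p h1, tau p] : Fin 2 → Equiv.Perm (ZMod (p^2))) r = 1 := by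
  intro r hr
  rcases hr with h | h | h
  · subst h
    rw [map_pow, FreeGroup.lift_apply_of]
    ext x
    simp [tau_pow]
  · subst h
    rw [map_pow, FreeGroup.lift_apply_of]
    ext x
    simp only [Matrix.cons_val_zero, sigma_pow, v_pow_p p h1, one_mul, Equiv.Perm.one_apply]
  · subst h
    simp only [map_mul, map_inv, map_pow, FreeGroup.lift_apply_of, Matrix.cons_val_zero,
      Matrix.cons_val_one, Matrix.head_cons]
    have key : (sigma p h1)⁻¹ * tau p * sigma p h1 = tau p ^ (p+1) := by
      ext x
      rw [Equiv.Perm.mul_apply, Equiv.Perm.mul_apply, tau_pow]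
      show (1 + (p:ZMod (p^2))) * (v p * x + 1) = x + ((p+1:ℕ):ZMod (p^2))
      push_cast
      linear_combination x * v_mul p h1
    rw [key, mul_inv_cancel]
end NA

namespace NA
variable {p : ℕ}

local notation "G" => PresentedGroup (heisRels p)

lemma rel_one {r : FreeGroup (Fin 2)} (hr : r ∈ heisRels p) :
    PresentedGroup.mk (heisRels p) r = 1 :=
  (QuotientGroup.eq_one_iff r).mpr (Subgroup.subset_normalClosure hr)

lemma t_pow : (PresentedGroup.of 1 : G) ^ (p^2) = 1 := by
  have := rel_one (p := p) (Or.inl rfl)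
  rwa [map_pow] at this

lemma s_pow : (PresentedGroup.of 0 : G) ^ p = 1 := by
  have := rel_one (p := p) (Or.inr (Or.inl rfl))
  rwa [map_pow] at this

lemma conj_rel :
    (PresentedGroup.of 0 : G)⁻¹ * PresentedGroup.of 1 * PresentedGroup.of 0 =
      PresentedGroup.of 1 ^ (p+1) := by
  have := rel_one (p := p) (Or.inr (Or.inr rfl))
  simp only [map_mul, map_inv, map_pow] at this
  rw [mul_inv_eq_one] at this
  exact this

end NA

namespace NA
variable {p : ℕ}

local notation "G" => PresentedGroup (heisRels p)
local notation "ss" => (PresentedGroup.of 0 : G)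
local notation "tt" => (PresentedGroup.of 1 : G)

lemma t_pow_congr {a b : ℕ} (h : (a : ZMod (p^2)) = b) : tt ^ a = tt ^ b := by
  have hm : a % p^2 = b % p^2 := (ZMod.natCast_eq_natCast_iff _ _ _).mp h
  have e : ∀ c : ℕ, tt ^ c = tt ^ (c % p^2) := by
    intro c
    conv_lhs => rw [← Nat.div_add_mod c (p^2)]
    rw [pow_add, pow_mul, t_pow, one_pow, one_mul]
  rw [e a, e b, hm]

lemma s_pow_congr {a b : ℕ} (h : (a : ZMod p) = b) : ss ^ a = ss ^ b := by
  have hm : a % p = b % p := (ZMod.natCast_eq_natCast_iff _ _ _).mp h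
  have e : ∀ c : ℕ, ss ^ c = ss ^ (c % p) := by
    intro c
    conv_lhs => rw [← Nat.div_add_mod c p]
    rw [pow_add, pow_mul, s_pow, one_pow, one_mul]
  rw [e a, e b, hm]

lemma t_pow_inj (h1 : 1 ≤ p) {a b : ℕ} (h : tt ^ a = tt ^ b) :
    (a : ZMod (p^2)) = (b : ZMod (p^2)) := by
  have := congrArg (PresentedGroup.toGroup (rels_hold p h1)) h
  simp only [map_pow, PresentedGroup.toGroup.of] at this
  have h0 := congrArg (fun f : Equiv.Perm (ZMod (p^2)) => f 0) this
  simpa [tau_pow] using h0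

lemma conjt_pow (n : ℕ) : ss⁻¹ * tt ^ n * ss = tt ^ (n * (p+1)) := by
  induction n with
  | zero => simp
  | succ k ih =>
    have h : ss⁻¹ * tt ^ (k+1) * ss = (ss⁻¹ * tt ^ k * ss) * (ss⁻¹ * tt * ss) := by
      rw [pow_succ]; group
    rw [h, ih, conj_rel, ← pow_add]
    congr 1
    ring

lemma conj_rev (h1 : 1 ≤ p) : ss * tt * ss⁻¹ = tt ^ ((p+1)^(p-1)) := by
  have h := conjt_pow (p := p) ((p+1)^(p-1))
  rw [← pow_succ (p+1) (p-1), Nat.sub_add_cancel h1] at h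
  have h2 : tt ^ ((p+1)^p) = tt ^ 1 := by
    apply t_pow_congr
    rw [Nat.add_comm p 1, cast_pow]
    push_cast
    linear_combination psq p
  rw [h2, pow_one] at h
  have h3 := congrArg (fun x => ss * x * ss⁻¹) h
  simpa [mul_assoc] using h3.symm

lemma conj_rev_pow (h1 : 1 ≤ p) (n : ℕ) :
    ss * tt ^ n * ss⁻¹ = tt ^ (n * ((p+1)^(p-1))) := by
  induction n with
  | zero => simp
  | succ k ih =>
    have h : ss * tt ^ (k+1) * ss⁻¹ = (ss * tt ^ k * ss⁻¹) * (ss * tt * ss⁻¹) := by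
      rw [pow_succ]; group
    rw [h, ih, conj_rev h1, ← pow_add]
    congr 1
    ring

lemma s_pow_conj (h1 : 1 ≤ p) (j n : ℕ) :
    ss ^ j * tt ^ n = tt ^ (n * ((p+1)^(p-1))^j) * ss ^ j := by
  induction j with
  | zero => simp
  | succ k ih =>
    have h : ss ^ (k+1) * tt ^ n = ss * (ss ^ k * tt ^ n) := by rw [pow_succ']; group
    rw [h, ih, ← mul_assoc,
      show ss * tt ^ (n * ((p+1)^(p-1))^k) * ss ^ k
        = (ss * tt ^ (n * ((p+1)^(p-1))^k) * ss⁻¹) * ss ^ (k+1) by rw [pow_succ']; group,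
      conj_rev_pow h1]
    congr 2 <;> ring

end NA

namespace NA
variable {p : ℕ}

local notation "G" => PresentedGroup (heisRels p)
local notation "ss" => (PresentedGroup.of 0 : G)
local notation "tt" => (PresentedGroup.of 1 : G)

lemma gen (h1 : 1 ≤ p) (g : G) : ∃ m b : ℕ, g = tt ^ m * ss ^ b := by
  induction g using PresentedGroup.induction_on with
  | H z =>
    induction z using FreeGroup.induction_on with
    | C1 => exact ⟨0, 0, by simp⟩
    | of x =>
      fin_cases x
      · exact ⟨0, 1, by rw [pow_zero, one_mul, pow_one]; rfl⟩
      · exact ⟨1, 0, by rw [pow_zero, mul_one, pow_one]; rfl⟩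
    | inv_of x _ =>
      fin_cases x
      · refine ⟨0, p - 1, ?_⟩
        have : (PresentedGroup.mk (heisRels p) (FreeGroup.of 0))⁻¹ = ss⁻¹ := rfl
        rw [map_inv]
        show ss⁻¹ = _
        rw [pow_zero, one_mul]
        symm
        apply eq_inv_of_mul_eq_one_left
        rw [← pow_succ, Nat.sub_add_cancel h1, s_pow]
      · refine ⟨p^2 - 1, 0, ?_⟩
        rw [map_inv]
        show tt⁻¹ = _
        rw [pow_zero, mul_one]
        symm
        apply eq_inv_of_mul_eq_one_left
        rw [← pow_succ, Nat.sub_add_cancel (Nat.one_le_pow 2 p h1), t_pow]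
    | mul x y hx hy =>
      obtain ⟨m, b, hm⟩ := hx
      obtain ⟨n, c, hn⟩ := hy
      refine ⟨m + n * ((p+1)^(p-1))^b, b + c, ?_⟩
      rw [map_mul, hm, hn]
      rw [mul_assoc, ← mul_assoc (ss ^ b), s_pow_conj h1, pow_add, pow_add, mul_assoc]
      rw [← mul_assoc (tt ^ m), ← pow_add]

lemma u_pow (h1 : 1 ≤ p) (m b k : ℕ) :
    (tt ^ m * ss ^ b) ^ k =
      tt ^ (m * ∑ j ∈ Finset.range k, ((p+1)^(p-1))^(b*j)) * ss ^ (b*k) := by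
  induction k with
  | zero => simp
  | succ k ih =>
    rw [pow_succ, ih, mul_assoc, ← mul_assoc (ss ^ (b*k)), s_pow_conj h1,
      mul_assoc, ← pow_add, ← mul_assoc, ← pow_add, Finset.sum_range_succ, Nat.mul_add]
    congr 2 <;> ring

end NA

namespace NA
variable {p : ℕ}

local notation "G" => PresentedGroup (heisRels p)
local notation "ss" => (PresentedGroup.of 0 : G)
local notation "tt" => (PresentedGroup.of 1 : G)

lemma sum_cast (h1 : 1 ≤ p) (b k : ℕ) :
    ((∑ j ∈ Finset.range k, ((p+1)^(p-1))^(b*j) : ℕ) : ZMod (p^2))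
      = (k : ZMod (p^2)) +
        ((p-1 : ℕ) : ZMod (p^2)) * b * ((p : ZMod (p^2)) * ∑ j ∈ Finset.range k, (j : ZMod (p^2))) := by
  rw [Nat.cast_sum]
  have hterm : ∀ j, ((((p+1)^(p-1))^(b*j) : ℕ) : ZMod (p^2))
      = 1 + (((p-1) : ℕ) : ZMod (p^2)) * b * j * p := by
    intro j
    rw [← pow_mul, Nat.add_comm p 1, cast_pow]
    push_cast
    ring
  calc ∑ j ∈ Finset.range k, ((((p+1)^(p-1))^(b*j) : ℕ) : ZMod (p^2))
      = ∑ j ∈ Finset.range k, (1 + (((p-1) : ℕ) : ZMod (p^2)) * b * p * (j : ZMod (p^2))) := by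
        apply Finset.sum_congr rfl
        intro j _
        rw [hterm]; ring
    _ = _ := by
        rw [Finset.sum_add_distrib, Finset.sum_const, Finset.card_range, ← Finset.mul_sum]
        push_cast
        ring

lemma two_unit (hp : p.Prime) (hp3 : 3 ≤ p) : IsUnit (2 : ZMod (p^2)) := by
  haveI : NeZero (p^2) := ⟨by positivity⟩
  have hco : Nat.Coprime 2 (p^2) :=
    Nat.Coprime.pow_right 2 ((Nat.coprime_primes Nat.prime_two hp).mpr (by omega))
  have := (ZMod.isUnit_iff_coprime 2 (p^2)).mpr hco
  simpa using this

lemma cancel_two (hp : p.Prime) (hp3 : 3 ≤ p) {x : ZMod (p^2)} (h : 2 * x = 0) : x = 0 := by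
  obtain ⟨u, hu⟩ := two_unit hp hp3
  have : (↑u⁻¹ : ZMod (p^2)) * (2 * x) = 0 := by rw [h, mul_zero]
  rwa [← mul_assoc, ← hu, Units.inv_mul, one_mul] at this

lemma psum_p (hp : p.Prime) (hp3 : 3 ≤ p) :
    (p : ZMod (p^2)) * (∑ j ∈ Finset.range p, (j : ZMod (p^2))) = 0 := by
  apply cancel_two hp hp3
  have h := Finset.sum_range_id_mul_two p
  have h2 := congrArg (fun n : ℕ => (n : ZMod (p^2))) h
  push_cast at h2
  calc 2 * ((p:ZMod (p^2)) * ∑ j ∈ Finset.range p, (j:ZMod (p^2)))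
      = (p:ZMod (p^2)) * ((∑ j ∈ Finset.range p, (j:ZMod (p^2))) * 2) := by ring
    _ = 0 := by rw [h2]; linear_combination ((p-1:ℕ) : ZMod (p^2)) * psq p

lemma psum_p1 (hp : p.Prime) (hp3 : 3 ≤ p) :
    (p : ZMod (p^2)) * (∑ j ∈ Finset.range (p+1), (j : ZMod (p^2))) = 0 := by
  apply cancel_two hp hp3
  have h := Finset.sum_range_id_mul_two (p+1)
  rw [Nat.add_sub_cancel] at h
  have h2 := congrArg (fun n : ℕ => (n : ZMod (p^2))) h
  push_cast at h2
  calc 2 * ((p:ZMod (p^2)) * ∑ j ∈ Finset.range (p+1), (j:ZMod (p^2)))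
      = (p:ZMod (p^2)) * ((∑ j ∈ Finset.range (p+1), (j:ZMod (p^2))) * 2) := by ring
    _ = 0 := by rw [h2]; linear_combination ((p:ZMod (p^2))+1) * psq p

end NA

/-- For a prime `p ≥ 3`, no automorphism of
`G = C_{p²} ⋊ C_p = ⟨s, t | t^(p²) = s^p = 1, s⁻¹ t s = t^(p+1)⟩` sends `s` to `s⁻¹`. -/
theorem no_aut_inverting_s_modular {p : ℕ} (hp : p.Prime) (hp3 : 3 ≤ p) :
    ∀ α : PresentedGroup (heisRels p) ≃* PresentedGroup (heisRels p),
      α (PresentedGroup.of 0) ≠ (PresentedGroup.of 0)⁻¹ := by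
  intro α hα
  have h1 : 1 ≤ p := by omega
  set ss : PresentedGroup (heisRels p) := PresentedGroup.of 0 with hss
  set tt : PresentedGroup (heisRels p) := PresentedGroup.of 1 with htt
  obtain ⟨m, b, hu⟩ := NA.gen h1 (α tt)
  set q : ℕ := (p+1)^(p-1) with hq
  -- the conjugation relation transported by α
  have hkey : ss * α tt * ss⁻¹ = (α tt)^(p+1) := by
    have h := congrArg α (NA.conj_rel (p := p))
    rw [← hss, ← htt] at h
    simp only [map_mul, map_inv, map_pow, hα, inv_inv] at h
    exact h
  rw [hu] at hkey
  -- compute both sides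
  have hL : ss * (tt^m * ss^b) * ss⁻¹ = tt^(m*q) * ss^b := by
    have e1 : ss * (tt^m * ss^b) * ss⁻¹ = (ss * tt^m * ss⁻¹) * ss^b := by group
    rw [e1, NA.conj_rev_pow h1]
  have hR : (tt^m * ss^b)^(p+1)
      = tt^(m * ∑ j ∈ Finset.range (p+1), q^(b*j)) * ss^b := by
    rw [NA.u_pow h1]
    congr 1
    apply NA.s_pow_congr
    push_cast [ZMod.natCast_self]
    ring
  rw [hL, hR] at hkey
  have hexp : ((m*q : ℕ) : ZMod (p^2)) = ((m * ∑ j ∈ Finset.range (p+1), q^(b*j) : ℕ) : ZMod (p^2)) :=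
    NA.t_pow_inj h1 (mul_right_cancel hkey)
  -- simplify the two sides mod p²
  have hqc : ((q : ℕ) : ZMod (p^2)) = 1 + ((p-1:ℕ) : ZMod (p^2)) * p := by
    rw [hq, Nat.add_comm p 1, NA.cast_pow]
  have hEc : ((∑ j ∈ Finset.range (p+1), q^(b*j) : ℕ) : ZMod (p^2)) = 1 + (p : ZMod (p^2)) := by
    rw [hq, NA.sum_cast h1, NA.psum_p1 hp hp3]
    push_cast
    ring
  have hsub : ((p-1:ℕ) : ZMod (p^2)) = (p : ZMod (p^2)) - 1 := by
    push_cast [Nat.cast_sub h1]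
    ring
  rw [Nat.cast_mul, Nat.cast_mul, hqc, hEc, hsub] at hexp
  -- derive m*p ≡ 0 mod p²
  have hMP : (m : ZMod (p^2)) * p = 0 := by
    apply NA.cancel_two hp hp3
    linear_combination (m : ZMod (p^2)) * NA.psq p - hexp
  -- now α tt ^ p = 1
  have hp_pow : (α tt)^p = 1 := by
    rw [hu, NA.u_pow h1]
    have e1 : tt^(m * ∑ j ∈ Finset.range p, q^(b*j)) = tt^(0:ℕ) := by
      apply NA.t_pow_congr
      push_cast [hq, NA.sum_cast h1, NA.psum_p hp hp3]
      linear_combination (p:ZMod (p^2)) * hMP + hMP - (m : ZMod (p^2)) * NA.psq p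
    have e2 : ss^(b*p) = ss^(0:ℕ) := by
      apply NA.s_pow_congr
      push_cast [ZMod.natCast_self]
      ring
    rw [e1, e2]
    simp
  have htp : tt^p = 1 := by
    apply α.injective
    rw [map_pow, hp_pow, map_one]
  have := NA.t_pow_inj h1 (a := p) (b := 0) (by simpa using htp)
  rw [Nat.cast_zero, ZMod.natCast_eq_zero_iff] at this
  have hle := Nat.le_of_dvd (by omega) this
  nlinarith
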